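/- Fix p ∈ (0,1) with 3/(1−p) = n+1, ρ > 0, and d > d_*. Let β < α be the two positive roots of Q(u) = −(1−p)²u^{n+1} + du³ − ρp². Then the improper integral I(d) = 3p(1−p)√(ρd) ∫_β^α u^{(4−p)/(2(1−p))} / ((du³ − ρp²)·√(Q(u))) du converges, and I is continuous as a function of d on (d_*, ∞). -/

import Mathlib

set_option linter.unusedSectionVars false
set_option maxHeartbeats 1000000
open MeasureTheory Set Filter

noncomputable def QQ (c k : ℝ) (n : ℕ) (d u : ℝ) : ℝ := -c * u ^ (n + 1) + d * u ^ 3 - k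

lemma qq_hasDerivAt (c k : ℝ) (n : ℕ) (d t : ℝ) :
    HasDerivAt (QQ c k n d) (3 * d * t ^ 2 - c * ((n : ℝ) + 1) * t ^ n) t := by
  have h1 : HasDerivAt (fun u : ℝ => u ^ (n + 1)) (((n : ℝ) + 1) * t ^ n) t := by
    simpa using hasDerivAt_pow (n + 1) t
  have h2 : HasDerivAt (fun u : ℝ => u ^ 3) (3 * t ^ 2) t := by
    simpa using hasDerivAt_pow 3 t
  have := ((h1.const_mul (-c)).add (h2.const_mul d)).sub_const k
  exact this.congr_deriv (by ring)

lemma qq_deriv (c k : ℝ) (n : ℕ) (d t : ℝ) :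
    deriv (QQ c k n d) t = 3 * d * t ^ 2 - c * ((n : ℝ) + 1) * t ^ n :=
  (qq_hasDerivAt c k n d t).deriv

lemma qq_cont (c k : ℝ) (n : ℕ) (d : ℝ) : Continuous (QQ c k n d) := by
  unfold QQ; continuity

-- deriv factorization: t^n = t^2 * t^(n-2) when 2 ≤ n
lemma qq_deriv_factor (c k : ℝ) (n : ℕ) (hn : 2 ≤ n) (d t : ℝ) :
    deriv (QQ c k n d) t = t ^ 2 * (3 * d - c * ((n : ℝ) + 1) * t ^ (n - 2)) := by
  rw [qq_deriv]
  have : t ^ n = t ^ 2 * t ^ (n - 2) := by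
    rw [← pow_add, Nat.add_sub_cancel' hn]
  rw [this]; ring

section roots
variable {c k : ℝ} {n : ℕ} {d bb aa : ℝ}
  (hc : 0 < c) (hn : 3 ≤ n)
  (hb0 : 0 < bb) (hba : bb < aa)
  (hQb : QQ c k n d bb = 0) (hQa : QQ c k n d aa = 0)
  (hpos : ∀ u, bb < u → u < aa → 0 < QQ c k n d u)

-- Claim A : slope positive at bb
include hc hn hb0 hba hQb hQa hpos in
lemma slope_beta : c * ((n : ℝ) + 1) * bb ^ (n - 2) < 3 * d := by
  by_contra h
  push_neg at h
  -- deriv ≤ 0 on Ici bb, so Q antitone on [bb, aa], contradiction at midpoint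
  have hanti : AntitoneOn (QQ c k n d) (Ici bb) := by
    apply antitoneOn_of_deriv_nonpos (convex_Ici bb) (qq_cont c k n d).continuousOn
      (fun t _ => ((qq_hasDerivAt c k n d t).differentiableAt).differentiableWithinAt)
    intro t ht
    rw [interior_Ici] at ht
    rw [qq_deriv_factor c k n (by omega) d t]
    have htb : bb ≤ t := le_of_lt ht
    have h2 : bb ^ (n - 2) ≤ t ^ (n - 2) := pow_le_pow_left₀ hb0.le htb _
    have h3 : 3 * d - c * ((n : ℝ) + 1) * t ^ (n - 2) ≤ 0 := by
      have hcn : 0 < c * ((n : ℝ) + 1) := by positivity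
      nlinarith
    exact mul_nonpos_of_nonneg_of_nonpos (sq_nonneg t) h3
  set m := (bb + aa) / 2 with hm
  have hbm : bb < m := by simp [hm]; linarith
  have hma : m < aa := by simp [hm]; linarith
  have := hanti (mem_Ici.2 le_rfl) (mem_Ici.2 hbm.le) hbm.le
  have := hpos m hbm hma
  rw [hQb] at *
  linarith

-- Claim B : slope negative at aa
include hc hn hb0 hba hQb hQa hpos in
lemma slope_alpha : 3 * d < c * ((n : ℝ) + 1) * aa ^ (n - 2) := by
  by_contra h
  push_neg at h
  have hmono : MonotoneOn (QQ c k n d) (Icc bb aa) := by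
    apply monotoneOn_of_deriv_nonneg (convex_Icc bb aa) (qq_cont c k n d).continuousOn
      (fun t _ => ((qq_hasDerivAt c k n d t).differentiableAt).differentiableWithinAt)
    intro t ht
    rw [interior_Icc] at ht
    rw [qq_deriv_factor c k n (by omega) d t]
    have ht0 : 0 < t := lt_trans hb0 ht.1
    have h2 : t ^ (n - 2) ≤ aa ^ (n - 2) := pow_le_pow_left₀ ht0.le ht.2.le _
    have hcn : 0 < c * ((n : ℝ) + 1) := by positivity
    have h3 : 0 ≤ 3 * d - c * ((n : ℝ) + 1) * t ^ (n - 2) := by nlinarith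
    exact mul_nonneg (sq_nonneg t) h3
  set m := (bb + aa) / 2 with hm
  have hbm : bb < m := by simp [hm]; linarith
  have hma : m < aa := by simp [hm]; linarith
  have := hmono (mem_Icc.2 ⟨hbm.le, hma.le⟩) (mem_Icc.2 ⟨hba.le, le_rfl⟩) hma.le
  have := hpos m hbm hma
  rw [hQa] at *
  linarith

-- strict mono on [0, bb]
include hc hn hb0 hba hQb hQa hpos in
lemma qq_strictMono_left : StrictMonoOn (QQ c k n d) (Icc 0 bb) := by
  apply strictMonoOn_of_deriv_pos (convex_Icc 0 bb) (qq_cont c k n d).continuousOn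
  intro t ht
  rw [interior_Icc] at ht
  rw [qq_deriv_factor c k n (by omega) d t]
  have hA := slope_beta hc hn hb0 hba hQb hQa hpos
  have h2 : t ^ (n - 2) < bb ^ (n - 2) := by
    apply pow_lt_pow_left₀ ht.2 ht.1.le
    omega
  have hcn : 0 < c * ((n : ℝ) + 1) := by positivity
  have ht2 : 0 < t ^ 2 := pow_pos ht.1 2
  have h3 : 0 < 3 * d - c * ((n : ℝ) + 1) * t ^ (n - 2) := by nlinarith
  exact mul_pos ht2 h3

-- strict anti on [aa, ∞)
include hc hn hb0 hba hQb hQa hpos in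
lemma qq_strictAnti_right : StrictAntiOn (QQ c k n d) (Ici aa) := by
  apply strictAntiOn_of_deriv_neg (convex_Ici aa) (qq_cont c k n d).continuousOn
  intro t ht
  rw [interior_Ici] at ht
  rw [qq_deriv_factor c k n (by omega) d t]
  have hB := slope_alpha hc hn hb0 hba hQb hQa hpos
  have ha0 : 0 < aa := lt_trans hb0 hba
  have h2 : aa ^ (n - 2) < t ^ (n - 2) := by
    apply pow_lt_pow_left₀ ht ha0.le
    omega
  have hcn : 0 < c * ((n : ℝ) + 1) := by positivity
  have ht2 : 0 < t ^ 2 := pow_pos (lt_trans ha0 ht) 2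
  have h3 : 3 * d - c * ((n : ℝ) + 1) * t ^ (n - 2) < 0 := by nlinarith
  exact mul_neg_of_pos_of_neg ht2 h3

-- Claim C : sign characterization
include hc hn hb0 hba hQb hQa hpos in
lemma qq_sign_char {u : ℝ} (hu : 0 < u) (hQu : 0 < QQ c k n d u) : bb < u ∧ u < aa := by
  constructor
  · by_contra h
    push_neg at h
    rcases eq_or_lt_of_le h with he | hlt
    · rw [← he] at hQb; linarith
    · have := qq_strictMono_left hc hn hb0 hba hQb hQa hpos
        (mem_Icc.2 ⟨hu.le, h⟩) (mem_Icc.2 ⟨hb0.le, le_rfl⟩) hlt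
      rw [hQb] at this; linarith
  · by_contra h
    push_neg at h
    rcases eq_or_lt_of_le h with he | hlt
    · rw [he] at hQa; linarith
    · have := qq_strictAnti_right hc hn hb0 hba hQb hQa hpos
        (mem_Ici.2 le_rfl) (mem_Ici.2 h) hlt
      rw [hQa] at this; linarith

end roots


-- integral of (u-e)^(-1/2) over Ioo e a
lemma sqrt_int_left {e a : ℝ} (hea : e ≤ a) :
    IntegrableOn (fun u : ℝ => (u - e) ^ (-(1/2) : ℝ)) (Ioo e a) ∧
    ∫ u in Ioo e a, (u - e) ^ (-(1/2) : ℝ) = 2 * Real.sqrt (a - e) := by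
  have hii : IntervalIntegrable (fun x : ℝ => x ^ (-(1/2) : ℝ)) volume 0 (a - e) :=
    intervalIntegral.intervalIntegrable_rpow' (by norm_num)
  have hii2 : IntervalIntegrable (fun u : ℝ => (u - e) ^ (-(1/2) : ℝ)) volume e a := by
    have := hii.comp_sub_right e
    simpa using this
  constructor
  · exact ((intervalIntegrable_iff_integrableOn_Ioc_of_le hea).1 hii2).mono_set Ioo_subset_Ioc_self
  · have h1 : ∫ u in Ioo e a, (u - e) ^ (-(1/2) : ℝ) =
        ∫ u in e..a, (u - e) ^ (-(1/2) : ℝ) := by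
      rw [intervalIntegral.intervalIntegral_eq_integral_uIoc, if_pos hea]
      rw [uIoc_of_le hea, MeasureTheory.integral_Ioc_eq_integral_Ioo]
      simp
    rw [h1]
    rw [intervalIntegral.integral_comp_sub_right (fun x => x ^ (-(1/2) : ℝ)) e]
    rw [integral_rpow (Or.inl (by norm_num))]
    rw [sub_self, Real.zero_rpow (by norm_num), Real.sqrt_eq_rpow]
    norm_num
    ring

lemma tail_est {f : ℝ → ℝ} {e a s B : ℝ} (hea : e < a) (hs : 0 < s) (hB : 0 ≤ B)
    (hmeas : AEStronglyMeasurable f (volume.restrict (Ioo e a)))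
    (hbd : ∀ u ∈ Ioo e a, ‖f u‖ ≤ B / Real.sqrt (s * (u - e))) :
    IntegrableOn f (Ioo e a) ∧
    |∫ u in Ioo e a, f u| ≤ B / Real.sqrt s * (2 * Real.sqrt (a - e)) := by
  obtain ⟨hgint, hgval⟩ := sqrt_int_left hea.le
  set g : ℝ → ℝ := fun u => B / Real.sqrt s * (u - e) ^ (-(1/2) : ℝ) with hg
  have hgint' : IntegrableOn g (Ioo e a) := hgint.const_mul _
  have hbd' : ∀ u ∈ Ioo e a, ‖f u‖ ≤ g u := by
    intro u hu
    refine le_trans (hbd u hu) ?_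
    have hue : 0 < u - e := by simp at hu; linarith [hu.1]
    rw [Real.sqrt_mul hs.le, hg]
    simp only
    rw [div_mul_eq_div_div, Real.rpow_neg hue.le, div_eq_mul_inv (B / Real.sqrt s)]
    gcongr
    rw [← Real.sqrt_eq_rpow]
  have hfint : IntegrableOn f (Ioo e a) := by
    apply Integrable.mono' hgint' hmeas
    rw [ae_restrict_iff' measurableSet_Ioo]
    exact ae_of_all _ hbd'
  refine ⟨hfint, ?_⟩
  calc |∫ u in Ioo e a, f u| ≤ ∫ u in Ioo e a, ‖f u‖ := by
        exact (norm_integral_le_integral_norm f)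
    _ ≤ ∫ u in Ioo e a, g u := by
        apply setIntegral_mono_on hfint.norm hgint' measurableSet_Ioo hbd'
    _ = B / Real.sqrt s * (2 * Real.sqrt (a - e)) := by
        rw [hg]
        simp only [MeasureTheory.integral_const_mul, hgval]


lemma sqrt_int_right {b a : ℝ} (hba : b ≤ a) :
    IntegrableOn (fun u : ℝ => (a - u) ^ (-(1/2) : ℝ)) (Ioo b a) ∧
    ∫ u in Ioo b a, (a - u) ^ (-(1/2) : ℝ) = 2 * Real.sqrt (a - b) := by
  have hii : IntervalIntegrable (fun x : ℝ => x ^ (-(1/2) : ℝ)) volume 0 (a - b) :=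
    intervalIntegral.intervalIntegrable_rpow' (by norm_num)
  have hii2 : IntervalIntegrable (fun u : ℝ => (a - u) ^ (-(1/2) : ℝ)) volume b a := by
    have := (hii.comp_sub_left a)
    simpa using this.symm
  constructor
  · exact ((intervalIntegrable_iff_integrableOn_Ioc_of_le hba).1 hii2).mono_set Ioo_subset_Ioc_self
  · have h1 : ∫ u in Ioo b a, (a - u) ^ (-(1/2) : ℝ) =
        ∫ u in b..a, (a - u) ^ (-(1/2) : ℝ) := by
      rw [intervalIntegral.intervalIntegral_eq_integral_uIoc, if_pos hba]
      rw [uIoc_of_le hba, MeasureTheory.integral_Ioc_eq_integral_Ioo]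
      simp
    rw [h1]
    rw [intervalIntegral.integral_comp_sub_left (fun x => x ^ (-(1/2) : ℝ)) a]
    rw [integral_rpow (Or.inl (by norm_num))]
    rw [sub_self, Real.zero_rpow (by norm_num), Real.sqrt_eq_rpow]
    norm_num
    ring

lemma tail_est_right {f : ℝ → ℝ} {b a s B : ℝ} (hba : b < a) (hs : 0 < s) (hB : 0 ≤ B)
    (hmeas : AEStronglyMeasurable f (volume.restrict (Ioo b a)))
    (hbd : ∀ u ∈ Ioo b a, ‖f u‖ ≤ B / Real.sqrt (s * (a - u))) :
    IntegrableOn f (Ioo b a) ∧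
    |∫ u in Ioo b a, f u| ≤ B / Real.sqrt s * (2 * Real.sqrt (a - b)) := by
  obtain ⟨hgint, hgval⟩ := sqrt_int_right hba.le
  set g : ℝ → ℝ := fun u => B / Real.sqrt s * (a - u) ^ (-(1/2) : ℝ) with hg
  have hgint' : IntegrableOn g (Ioo b a) := hgint.const_mul _
  have hbd' : ∀ u ∈ Ioo b a, ‖f u‖ ≤ g u := by
    intro u hu
    refine le_trans (hbd u hu) ?_
    have hue : 0 < a - u := by simp at hu; linarith [hu.2]
    rw [Real.sqrt_mul hs.le, hg]
    simp only
    rw [div_mul_eq_div_div, Real.rpow_neg hue.le, div_eq_mul_inv (B / Real.sqrt s)]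
    gcongr
    rw [← Real.sqrt_eq_rpow]
  have hfint : IntegrableOn f (Ioo b a) := by
    apply Integrable.mono' hgint' hmeas
    rw [ae_restrict_iff' measurableSet_Ioo]
    exact ae_of_all _ hbd'
  refine ⟨hfint, ?_⟩
  calc |∫ u in Ioo b a, f u| ≤ ∫ u in Ioo b a, ‖f u‖ := norm_integral_le_integral_norm f
    _ ≤ ∫ u in Ioo b a, g u := setIntegral_mono_on hfint.norm hgint' measurableSet_Ioo hbd'
    _ = B / Real.sqrt s * (2 * Real.sqrt (a - b)) := by
        rw [hg]; simp only [MeasureTheory.integral_const_mul, hgval]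

section dlayer
variable {c k dstar : ℝ} {n : ℕ} {α β : ℝ → ℝ}

variable (hc : 0 < c) (hn : 3 ≤ n)
  (hR : ∀ d, dstar < d → 0 < β d ∧ β d < α d ∧ QQ c k n d (β d) = 0 ∧
    QQ c k n d (α d) = 0 ∧ ∀ u, β d < u → u < α d → 0 < QQ c k n d u)

lemma qq_shift (d d' u : ℝ) : QQ c k n d' u = QQ c k n d u + (d' - d) * u ^ 3 := by
  unfold QQ; ring

include hc hn hR in
lemma sign_char {d : ℝ} (hd : dstar < d) {u : ℝ} (hu : 0 < u)
    (hQu : 0 < QQ c k n d u) : β d < u ∧ u < α d := by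
  obtain ⟨h1, h2, h3, h4, h5⟩ := hR d hd
  exact qq_sign_char hc hn h1 h2 h3 h4 h5 hu hQu

include hc hn hR in
lemma roots_mono {d1 d2 : ℝ} (hd1 : dstar < d1) (h12 : d1 < d2) :
    β d2 < β d1 ∧ α d1 < α d2 := by
  obtain ⟨h1, h2, h3, h4, h5⟩ := hR d1 hd1
  have hd2 : dstar < d2 := lt_trans hd1 h12
  have hb : 0 < QQ c k n d2 (β d1) := by
    rw [qq_shift d1 d2, h3]
    have : 0 < (d2 - d1) * (β d1) ^ 3 := mul_pos (by linarith) (pow_pos h1 3)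
    linarith
  have ha : 0 < QQ c k n d2 (α d1) := by
    rw [qq_shift d1 d2, h4]
    have h0 : 0 < α d1 := lt_trans h1 h2
    have : 0 < (d2 - d1) * (α d1) ^ 3 := mul_pos (by linarith) (pow_pos h0 3)
    linarith
  exact ⟨(sign_char hc hn hR hd2 h1 hb).1,
    (sign_char hc hn hR hd2 (lt_trans h1 h2) ha).2⟩

include hc hn hR in
lemma roots_mono' {d1 d2 : ℝ} (hd1 : dstar < d1) (h12 : d1 ≤ d2) :
    β d2 ≤ β d1 ∧ α d1 ≤ α d2 := by
  rcases eq_or_lt_of_le h12 with he | hlt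
  · rw [he]; exact ⟨le_rfl, le_rfl⟩
  · have := roots_mono hc hn hR hd1 hlt
    exact ⟨this.1.le, this.2.le⟩

include hc hn hR in
lemma beta_continuousAt {d₀ : ℝ} (hd₀ : dstar < d₀) : ContinuousAt β d₀ := by
  obtain ⟨h1, h2, h3, h4, h5⟩ := hR d₀ hd₀
  rw [ContinuousAt, tendsto_order]
  constructor
  · intro x hx
    set x' := (x + β d₀) / 2 with hx'
    have hxx' : x < x' := by simp [hx']; linarith
    have hx'b : x' < β d₀ := by simp [hx']; linarith
    rcases le_or_gt x' 0 with hneg | hposx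
    · filter_upwards [Ioi_mem_nhds hd₀] with d hd
      exact lt_of_lt_of_le hxx' (le_trans hneg (hR d hd).1.le)
    · have hQx' : QQ c k n d₀ x' < 0 := by
        have := qq_strictMono_left hc hn h1 h2 h3 h4 h5
          (mem_Icc.2 ⟨hposx.le, hx'b.le⟩) (mem_Icc.2 ⟨h1.le, le_rfl⟩) hx'b
        rw [h3] at this; exact this
      have hcont : Continuous (fun d => QQ c k n d x') := by
        unfold QQ; continuity
      have hev : ∀ᶠ d in nhds d₀, QQ c k n d x' < 0 :=
        hcont.continuousAt.eventually_lt_const hQx'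
      filter_upwards [Ioi_mem_nhds hd₀, hev] with d hd hQ
      rcases le_or_gt d d₀ with hle | hgt
      · exact lt_of_lt_of_le (lt_of_lt_of_le hxx' hx'b.le)
          (roots_mono' hc hn hR hd hle).1
      · have hαd : x' < α d :=
          lt_trans (lt_trans hx'b h2) (roots_mono hc hn hR hd₀ hgt).2
        by_contra hcon
        push_neg at hcon
        have : β d < x' := lt_of_le_of_lt hcon hxx'
        exact absurd ((hR d hd).2.2.2.2 x' this hαd) (not_lt.2 hQ.le)
  · intro y hy
    set y' := min ((β d₀ + y) / 2) ((β d₀ + α d₀) / 2) with hy'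
    have hby' : β d₀ < y' := by
      simp [hy']; constructor <;> linarith
    have hy'y : y' < y := lt_of_le_of_lt (min_le_left _ _) (by linarith)
    have hy'a : y' < α d₀ := lt_of_le_of_lt (min_le_right _ _) (by linarith)
    have hQy' : 0 < QQ c k n d₀ y' := h5 y' hby' hy'a
    have hcont : Continuous (fun d => QQ c k n d y') := by
      unfold QQ; continuity
    have hev : ∀ᶠ d in nhds d₀, 0 < QQ c k n d y' :=
      hcont.continuousAt.eventually_const_lt hQy'
    filter_upwards [Ioi_mem_nhds hd₀, hev] with d hd hQ
    exact lt_trans (sign_char hc hn hR hd (lt_trans h1 hby') hQ).1 hy'y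

include hc hn hR in
lemma alpha_continuousAt {d₀ : ℝ} (hd₀ : dstar < d₀) : ContinuousAt α d₀ := by
  obtain ⟨h1, h2, h3, h4, h5⟩ := hR d₀ hd₀
  rw [ContinuousAt, tendsto_order]
  constructor
  · intro x hx
    set x' := max ((x + α d₀) / 2) ((β d₀ + α d₀) / 2) with hx'
    have hxx' : x < x' := lt_of_lt_of_le (by linarith) (le_max_left _ _)
    have hx'a : x' < α d₀ := by
      simp [hx']; constructor <;> linarith
    have hbx' : β d₀ < x' := lt_of_lt_of_le (by linarith) (le_max_right _ _)
    have hQx' : 0 < QQ c k n d₀ x' := h5 x' hbx' hx'a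
    have hcont : Continuous (fun d => QQ c k n d x') := by
      unfold QQ; continuity
    have hev : ∀ᶠ d in nhds d₀, 0 < QQ c k n d x' :=
      hcont.continuousAt.eventually_const_lt hQx'
    filter_upwards [Ioi_mem_nhds hd₀, hev] with d hd hQ
    exact lt_trans hxx' (sign_char hc hn hR hd (lt_trans h1 hbx') hQ).2
  · intro y hy
    set y' := (α d₀ + y) / 2 with hy'
    have hay' : α d₀ < y' := by simp [hy']; linarith
    have hy'y : y' < y := by simp [hy']; linarith
    have hQy' : QQ c k n d₀ y' < 0 := by
      have := qq_strictAnti_right hc hn h1 h2 h3 h4 h5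
        (mem_Ici.2 le_rfl) (mem_Ici.2 hay'.le) hay'
      rw [h4] at this; exact this
    have hcont : Continuous (fun d => QQ c k n d y') := by
      unfold QQ; continuity
    have hev : ∀ᶠ d in nhds d₀, QQ c k n d y' < 0 :=
      hcont.continuousAt.eventually_lt_const hQy'
    filter_upwards [Ioi_mem_nhds hd₀, hev] with d hd hQ
    rcases le_or_gt d d₀ with hle | hgt
    · exact lt_of_le_of_lt (lt_of_le_of_lt (roots_mono' hc hn hR hd hle).2 hay').le hy'y |>.trans_le le_rfl
    · have hβd : β d < y' := lt_trans (lt_trans (roots_mono hc hn hR hd₀ hgt).1 h2) hay'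
      by_contra hcon
      push_neg at hcon
      have : y' < α d := lt_of_lt_of_le hy'y hcon
      exact absurd ((hR d hd).2.2.2.2 y' hβd this) (not_lt.2 hQ.le)


include hc hn hR in
lemma left_slope {d₀ : ℝ} (hd₀ : dstar < d₀) :
    ∃ s > (0:ℝ), ∃ δ₀ > (0:ℝ), ∀ᶠ d in nhds d₀, dstar < d ∧
      ∀ u, β d ≤ u → u ≤ β d₀ + δ₀ → s * (u - β d) ≤ QQ c k n d u := by
  obtain ⟨h1, h2, h3, h4, h5⟩ := hR d₀ hd₀
  have hA := slope_beta hc hn h1 h2 h3 h4 h5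
  set s₀ : ℝ := (β d₀) ^ 2 * (3 * d₀ - c * ((n : ℝ) + 1) * (β d₀) ^ (n - 2)) with hs₀
  have hs₀pos : 0 < s₀ := mul_pos (pow_pos h1 2) (by linarith)
  set φ : ℝ × ℝ → ℝ := fun q => 3 * q.1 * q.2 ^ 2 - c * ((n : ℝ) + 1) * q.2 ^ n with hφ
  have hφc : Continuous φ := by rw [hφ]; continuity
  have hφ0 : s₀ / 2 < φ (d₀, β d₀) := by
    have : φ (d₀, β d₀) = deriv (QQ c k n d₀) (β d₀) := by
      rw [qq_deriv]
    rw [this, qq_deriv_factor c k n (by omega)]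
    linarith
  have hev : ∀ᶠ q in nhds (d₀, β d₀), s₀ / 2 < φ q :=
    hφc.continuousAt.eventually_const_lt hφ0
  rw [Metric.eventually_nhds_iff] at hev
  obtain ⟨ε, hε, hball⟩ := hev
  refine ⟨s₀ / 2, by linarith, ε / 2, by linarith, ?_⟩
  have hβc := beta_continuousAt hc hn hR hd₀
  rw [ContinuousAt, Metric.tendsto_nhds] at hβc
  filter_upwards [Ioi_mem_nhds hd₀, hβc (ε / 2) (by linarith),
    Metric.ball_mem_nhds d₀ (by linarith : (0:ℝ) < ε / 2)] with d hd hβd hdd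
  refine ⟨hd, fun u hu1 hu2 => ?_⟩
  rw [Real.dist_eq] at hβd
  rw [Metric.mem_ball, Real.dist_eq] at hdd
  have hderiv : ∀ t ∈ interior (Icc (β d) (β d₀ + ε / 2)),
      s₀ / 2 ≤ deriv (QQ c k n d) t := by
    intro t ht
    rw [interior_Icc] at ht
    have htd : dist (d, t) (d₀, β d₀) < ε := by
      rw [Prod.dist_eq]
      simp only [sup_lt_iff]
      constructor
      · rw [Real.dist_eq]; linarith [abs_lt.1 hdd]
      · rw [Real.dist_eq, abs_lt]
        have := abs_lt.1 hβd
        constructor <;> [linarith [ht.1]; linarith [ht.2]]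
    have := hball htd
    rw [qq_deriv]
    exact le_of_lt this
  have key := Convex.mul_sub_le_image_sub_of_le_deriv (convex_Icc (β d) (β d₀ + ε / 2))
    (qq_cont c k n d).continuousOn
    (fun t _ => ((qq_hasDerivAt c k n d t).differentiableAt).differentiableWithinAt)
    hderiv (β d) (mem_Icc.2 ⟨le_rfl, by linarith [abs_lt.1 hβd]⟩)
    u (mem_Icc.2 ⟨hu1, hu2⟩) hu1
  have hz : QQ c k n d (β d) = 0 := (hR d hd).2.2.1
  linarith

include hc hn hR in
lemma right_slope {d₀ : ℝ} (hd₀ : dstar < d₀) :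
    ∃ s > (0:ℝ), ∃ δ₀ > (0:ℝ), ∀ᶠ d in nhds d₀, dstar < d ∧
      ∀ u, α d₀ - δ₀ ≤ u → u ≤ α d → s * (α d - u) ≤ QQ c k n d u := by
  obtain ⟨h1, h2, h3, h4, h5⟩ := hR d₀ hd₀
  have hB := slope_alpha hc hn h1 h2 h3 h4 h5
  have ha0 : 0 < α d₀ := lt_trans h1 h2
  set s₀ : ℝ := (α d₀) ^ 2 * (c * ((n : ℝ) + 1) * (α d₀) ^ (n - 2) - 3 * d₀) with hs₀
  have hs₀pos : 0 < s₀ := mul_pos (pow_pos ha0 2) (by linarith)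
  set φ : ℝ × ℝ → ℝ := fun q => 3 * q.1 * q.2 ^ 2 - c * ((n : ℝ) + 1) * q.2 ^ n with hφ
  have hφc : Continuous φ := by rw [hφ]; continuity
  have hφ0 : φ (d₀, α d₀) < -(s₀ / 2) := by
    have : φ (d₀, α d₀) = deriv (QQ c k n d₀) (α d₀) := by rw [qq_deriv]
    rw [this, qq_deriv_factor c k n (by omega)]
    nlinarith
  have hev : ∀ᶠ q in nhds (d₀, α d₀), φ q < -(s₀ / 2) :=
    hφc.continuousAt.eventually_lt_const hφ0
  rw [Metric.eventually_nhds_iff] at hev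
  obtain ⟨ε, hε, hball⟩ := hev
  refine ⟨s₀ / 2, by linarith, ε / 2, by linarith, ?_⟩
  have hαc := alpha_continuousAt hc hn hR hd₀
  rw [ContinuousAt, Metric.tendsto_nhds] at hαc
  filter_upwards [Ioi_mem_nhds hd₀, hαc (ε / 2) (by linarith),
    Metric.ball_mem_nhds d₀ (by linarith : (0:ℝ) < ε / 2)] with d hd hαd hdd
  refine ⟨hd, fun u hu1 hu2 => ?_⟩
  rw [Real.dist_eq] at hαd
  rw [Metric.mem_ball, Real.dist_eq] at hdd
  have hderiv : ∀ t ∈ interior (Icc (α d₀ - ε / 2) (α d)),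
      deriv (QQ c k n d) t ≤ -(s₀ / 2) := by
    intro t ht
    rw [interior_Icc] at ht
    have htd : dist (d, t) (d₀, α d₀) < ε := by
      rw [Prod.dist_eq]
      simp only [sup_lt_iff]
      constructor
      · rw [Real.dist_eq]; linarith [abs_lt.1 hdd]
      · rw [Real.dist_eq, abs_lt]
        have := abs_lt.1 hαd
        constructor <;> [linarith [ht.1]; linarith [ht.2]]
    have := hball htd
    rw [qq_deriv]
    exact le_of_lt this
  have key := Convex.image_sub_le_mul_sub_of_deriv_le (convex_Icc (α d₀ - ε / 2) (α d))
    (qq_cont c k n d).continuousOn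
    (fun t _ => ((qq_hasDerivAt c k n d t).differentiableAt).differentiableWithinAt)
    hderiv u (mem_Icc.2 ⟨hu1, hu2⟩)
    (α d) (mem_Icc.2 ⟨by linarith [abs_lt.1 hαd], le_rfl⟩) hu2
  have hz : QQ c k n d (α d) = 0 := (hR d hd).2.2.2.1
  nlinarith


end dlayer

noncomputable def FF (γ c k : ℝ) (n : ℕ) (d u : ℝ) : ℝ :=
  u ^ γ / ((d * u ^ 3 - k) * Real.sqrt (QQ c k n d u))

lemma ff_meas (γ c k : ℝ) (n : ℕ) (d : ℝ) : Measurable (FF γ c k n d) := by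
  unfold FF
  apply Measurable.div
  · measurability
  · apply Measurable.mul
    · exact ((measurable_id.pow_const 3).const_mul d).sub measurable_const
    · exact (qq_cont c k n d).measurable.sqrt

section dlayer2
variable {c k dstar γ : ℝ} {n : ℕ} {α β : ℝ → ℝ}
variable (hc : 0 < c) (hn : 3 ≤ n) (hγ : 0 < γ)
  (hR : ∀ d, dstar < d → 0 < β d ∧ β d < α d ∧ QQ c k n d (β d) = 0 ∧
    QQ c k n d (α d) = 0 ∧ ∀ u, β d < u → u < α d → 0 < QQ c k n d u)

include hR in
lemma qq_nonneg {d : ℝ} (hd : dstar < d) {u : ℝ} (hu : u ∈ Icc (β d) (α d)) :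
    0 ≤ QQ c k n d u := by
  obtain ⟨h1, h2, h3, h4, h5⟩ := hR d hd
  rcases eq_or_lt_of_le hu.1 with he | hl
  · rw [← he, h3]
  rcases eq_or_lt_of_le hu.2 with he | hr
  · rw [he, h4]
  exact (h5 u hl hr).le

include hc hR in
lemma denom1 {d : ℝ} (hd : dstar < d) {u : ℝ} (hu : u ∈ Icc (β d) (α d)) :
    c * (β d) ^ (n + 1) ≤ d * u ^ 3 - k := by
  obtain ⟨h1, h2, h3, h4, h5⟩ := hR d hd
  have hq := qq_nonneg hR hd hu
  have hpow : (β d) ^ (n + 1) ≤ u ^ (n + 1) := pow_le_pow_left₀ h1.le hu.1 _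
  have : d * u ^ 3 - k = QQ c k n d u + c * u ^ (n + 1) := by unfold QQ; ring
  rw [this]
  nlinarith

include hc hγ hR in
lemma ff_bound {d L U : ℝ} (hd : dstar < d) (hL : 0 < L) (hLβ : L ≤ β d) (hαU : α d ≤ U)
    {u : ℝ} (hu : u ∈ Icc (β d) (α d)) :
    ‖FF γ c k n d u‖ ≤ (U ^ γ / (c * L ^ (n + 1))) / Real.sqrt (QQ c k n d u) := by
  obtain ⟨h1, h2, h3, h4, h5⟩ := hR d hd
  have hu0 : 0 < u := lt_of_lt_of_le (lt_of_lt_of_le hL hLβ) hu.1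
  have hq := qq_nonneg hR hd hu
  have hD : c * L ^ (n + 1) ≤ d * u ^ 3 - k := by
    refine le_trans ?_ (denom1 hc hR hd hu)
    have : L ^ (n + 1) ≤ (β d) ^ (n + 1) := pow_le_pow_left₀ hL.le hLβ _
    nlinarith
  have hDpos : 0 < c * L ^ (n + 1) := by positivity
  have hN : u ^ γ ≤ U ^ γ :=
    Real.rpow_le_rpow hu0.le (le_trans hu.2 hαU) hγ.le
  have hN0 : 0 ≤ u ^ γ := Real.rpow_nonneg hu0.le _
  have hnorm : ‖FF γ c k n d u‖ = u ^ γ / ((d * u ^ 3 - k) * Real.sqrt (QQ c k n d u)) := by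
    unfold FF
    rw [Real.norm_eq_abs,
      abs_of_nonneg (div_nonneg hN0 (mul_nonneg (by linarith) (Real.sqrt_nonneg _)))]
  rw [hnorm]
  rcases eq_or_lt_of_le hq with hq0 | hqpos
  · rw [← hq0, Real.sqrt_zero, mul_zero, div_zero, div_zero]
  · have hsq : 0 < Real.sqrt (QQ c k n d u) := Real.sqrt_pos.2 hqpos
    rw [div_div]
    apply div_le_div₀ (Real.rpow_nonneg (by linarith [hL, hLβ] : (0:ℝ) ≤ U) _) hN
      (by positivity)
    exact mul_le_mul_of_nonneg_right hD (Real.sqrt_nonneg _)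

include hc hn hγ hR in
lemma ff_integrable {d : ℝ} (hd : dstar < d) :
    IntegrableOn (FF γ c k n d) (Ioo (β d) (α d)) := by
  obtain ⟨h1, h2, h3, h4, h5⟩ := hR d hd
  set B := (α d) ^ γ / (c * (β d) ^ (n + 1)) with hBdef
  have hB : 0 ≤ B := by
    apply div_nonneg (Real.rpow_nonneg (by linarith) _)
    positivity
  have hbound : ∀ u ∈ Icc (β d) (α d),
      ‖FF γ c k n d u‖ ≤ B / Real.sqrt (QQ c k n d u) :=
    fun u hu => ff_bound hc hγ hR hd h1 le_rfl le_rfl hu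
  obtain ⟨sL, hsL, δL, hδL, hevL⟩ := left_slope hc hn hR hd
  obtain ⟨sR, hsR, δR, hδR, hevR⟩ := right_slope hc hn hR hd
  have hL := hevL.self_of_nhds
  have hRt := hevR.self_of_nhds
  set δ := min (min δL δR) ((α d - β d) / 3) with hδdef
  have hδ : 0 < δ := by
    apply lt_min (lt_min hδL hδR)
    linarith
  set a := β d + δ with hadef
  set b := α d - δ with hbdef
  have hba : β d < a := by simp [hadef]; linarith
  have hab : a ≤ b := by
    simp [hadef, hbdef]
    have : δ ≤ (α d - β d) / 3 := min_le_right _ _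
    linarith
  have hbα : b < α d := by simp [hbdef]; linarith
  have haα : a ≤ α d := le_trans hab hbα.le
  have hβb : β d ≤ b := le_trans hba.le hab
  have hmeas : ∀ S : Set ℝ, AEStronglyMeasurable (FF γ c k n d) (volume.restrict S) :=
    fun S => (ff_meas γ c k n d).aestronglyMeasurable
  -- left piece
  have hleft : IntegrableOn (FF γ c k n d) (Ioo (β d) a) := by
    refine (tail_est hba hsL hB (hmeas _) ?_).1
    intro u hu
    refine le_trans (hbound u ⟨hu.1.le, le_trans hu.2.le haα⟩) ?_
    have hQge : sL * (u - β d) ≤ QQ c k n d u := by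
      apply hL.2 u hu.1.le
      have : δ ≤ δL := le_trans (min_le_left _ _) (min_le_left _ _)
      have := hu.2
      simp [hadef] at this ⊢
      linarith
    have hpos2 : 0 < sL * (u - β d) := by
      have := hu.1; apply mul_pos hsL; linarith
    exact div_le_div_of_nonneg_left hB (Real.sqrt_pos.2 hpos2) (Real.sqrt_le_sqrt hQge)
  -- right piece
  have hright : IntegrableOn (FF γ c k n d) (Ioo b (α d)) := by
    refine (tail_est_right hbα hsR hB (hmeas _) ?_).1
    intro u hu
    refine le_trans (hbound u ⟨le_trans hβb hu.1.le, hu.2.le⟩) ?_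
    have hQge : sR * (α d - u) ≤ QQ c k n d u := by
      apply hRt.2 u _ hu.2.le
      have : δ ≤ δR := le_trans (min_le_left _ _) (min_le_right _ _)
      have := hu.1
      simp [hbdef] at this ⊢
      linarith
    have hpos2 : 0 < sR * (α d - u) := by
      have := hu.2; apply mul_pos hsR; linarith
    exact div_le_div_of_nonneg_left hB (Real.sqrt_pos.2 hpos2) (Real.sqrt_le_sqrt hQge)
  -- middle piece
  have hmid : IntegrableOn (FF γ c k n d) (Icc a b) := by
    obtain ⟨u₀, hu₀mem, hu₀min⟩ := isCompact_Icc.exists_isMinOn (nonempty_Icc.2 hab)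
      (qq_cont c k n d).continuousOn
    have hu₀pos : 0 < QQ c k n d u₀ := by
      apply h5 u₀ (lt_of_lt_of_le hba hu₀mem.1) (lt_of_le_of_lt hu₀mem.2 hbα)
    apply Integrable.mono' (g := fun _ => B / Real.sqrt (QQ c k n d u₀))
      (integrableOn_const measure_Icc_lt_top.ne) (hmeas _)
    rw [ae_restrict_iff' measurableSet_Icc]
    apply ae_of_all
    intro u hu
    refine le_trans (hbound u ⟨le_trans hba.le hu.1, le_trans hu.2 hbα.le⟩) ?_
    exact div_le_div_of_nonneg_left hB (Real.sqrt_pos.2 hu₀pos) (Real.sqrt_le_sqrt (hu₀min hu))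
  have hset : Ioo (β d) (α d) = (Ioo (β d) a ∪ Icc a b) ∪ Ioo b (α d) := by
    ext u
    simp only [mem_union, mem_Ioo, mem_Icc]
    constructor
    · rintro ⟨hu1, hu2⟩
      rcases lt_or_ge u a with h | h
      · exact Or.inl (Or.inl ⟨hu1, h⟩)
      rcases le_or_gt u b with h' | h'
      · exact Or.inl (Or.inr ⟨h, h'⟩)
      · exact Or.inr ⟨h', hu2⟩
    · rintro ((⟨hu1, hu2⟩ | ⟨hu1, hu2⟩) | ⟨hu1, hu2⟩) <;>
        exact ⟨by linarith, by linarith⟩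
  rw [hset]
  exact (hleft.union hmid).union hright


include hc hγ hR in
lemma mid_cont {d₀ a b : ℝ} (hd₀ : dstar < d₀) (ha : β d₀ < a) (hab : a ≤ b) (hb : b < α d₀) :
    ContinuousAt (fun d => ∫ u in Ico a b, FF γ c k n d u) d₀ := by
  obtain ⟨h1, h2, h3, h4, h5⟩ := hR d₀ hd₀
  have ha0 : 0 < a := lt_trans h1 ha
  have hb0 : 0 < b := lt_of_lt_of_le ha0 hab
  obtain ⟨u₀, hu₀mem, hu₀min⟩ := isCompact_Icc.exists_isMinOn (nonempty_Icc.2 hab)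
    (qq_cont c k n d₀).continuousOn
  set q₀ := QQ c k n d₀ u₀ with hq₀def
  have hq₀ : 0 < q₀ :=
    h5 u₀ (lt_of_lt_of_le ha hu₀mem.1) (lt_of_le_of_lt hu₀mem.2 hb)
  set C := b ^ γ / ((c * a ^ (n + 1)) * Real.sqrt (q₀ / 2)) with hCdef
  apply MeasureTheory.continuousAt_of_dominated (bound := fun _ => C)
  · exact Filter.Eventually.of_forall (fun d => (ff_meas γ c k n d).aestronglyMeasurable)
  · have hev : ∀ᶠ d in nhds d₀, |d - d₀| < q₀ / (2 * (b ^ 3 + 1)) := by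
      have : ContinuousAt (fun d : ℝ => |d - d₀|) d₀ := by fun_prop
      apply this.eventually_lt_const
      simp
      positivity
    filter_upwards [hev] with d hd
    rw [ae_restrict_iff' measurableSet_Ico]
    apply ae_of_all
    intro u hu
    have hu0 : 0 < u := lt_of_lt_of_le ha0 hu.1
    have hub : u ≤ b := hu.2.le
    have hQd₀ : q₀ ≤ QQ c k n d₀ u := hu₀min ⟨hu.1, hub⟩
    have hQd : q₀ / 2 ≤ QQ c k n d u := by
      have hshift : QQ c k n d u = QQ c k n d₀ u + (d - d₀) * u ^ 3 := qq_shift d₀ d u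
      have habs : |(d - d₀) * u ^ 3| ≤ |d - d₀| * b ^ 3 := by
        rw [abs_mul]
        apply mul_le_mul_of_nonneg_left _ (abs_nonneg _)
        rw [abs_of_nonneg (by positivity : (0:ℝ) ≤ u ^ 3)]
        exact pow_le_pow_left₀ hu0.le hub 3
      have h2' : |d - d₀| * b ^ 3 ≤ q₀ / 2 := by
        have hbp : (0:ℝ) < b ^ 3 + 1 := by positivity
        have := mul_le_mul_of_nonneg_right hd.le (by positivity : (0:ℝ) ≤ b ^ 3)
        calc |d - d₀| * b ^ 3 ≤ q₀ / (2 * (b ^ 3 + 1)) * b ^ 3 := this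
          _ ≤ q₀ / 2 := by
            rw [div_mul_eq_mul_div, div_le_div_iff₀ (by positivity) (by norm_num)]
            nlinarith
      have hlow : -(q₀ / 2) ≤ (d - d₀) * u ^ 3 := by
        have := (abs_le.1 (habs.trans h2')).1
        linarith
      linarith
    have hD : c * a ^ (n + 1) ≤ d * u ^ 3 - k := by
      have heq : d * u ^ 3 - k = QQ c k n d u + c * u ^ (n + 1) := by unfold QQ; ring
      have hpow : a ^ (n + 1) ≤ u ^ (n + 1) := pow_le_pow_left₀ ha0.le hu.1 _
      rw [heq]
      nlinarith
    have hsq : Real.sqrt (q₀ / 2) ≤ Real.sqrt (QQ c k n d u) := Real.sqrt_le_sqrt hQd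
    have hsqpos : (0:ℝ) < Real.sqrt (q₀ / 2) := Real.sqrt_pos.2 (by linarith)
    have hnorm : ‖FF γ c k n d u‖ = u ^ γ / ((d * u ^ 3 - k) * Real.sqrt (QQ c k n d u)) := by
      unfold FF
      rw [Real.norm_eq_abs, abs_of_nonneg (div_nonneg (Real.rpow_nonneg hu0.le _)
        (mul_nonneg (by nlinarith [pow_pos ha0 (n+1)]) (Real.sqrt_nonneg _)))]
    rw [hnorm, hCdef]
    apply div_le_div₀ (Real.rpow_nonneg hb0.le _)
      (Real.rpow_le_rpow hu0.le hub hγ.le) (by positivity)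
    exact mul_le_mul hD hsq hsqpos.le (by nlinarith [pow_pos ha0 (n+1)])
  · exact integrableOn_const measure_Ico_lt_top.ne
  · rw [ae_restrict_iff' measurableSet_Ico]
    apply ae_of_all
    intro u hu
    have hu0 : 0 < u := lt_of_lt_of_le ha0 hu.1
    have hQpos : 0 < QQ c k n d₀ u :=
      h5 u (lt_of_lt_of_le ha hu.1) (lt_of_lt_of_le hu.2 hb.le)
    have hDpos : 0 < d₀ * u ^ 3 - k := by
      have heq : d₀ * u ^ 3 - k = QQ c k n d₀ u + c * u ^ (n + 1) := by unfold QQ; ring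
      rw [heq]
      have := pow_pos hu0 (n + 1)
      nlinarith
    unfold FF
    apply ContinuousAt.div continuousAt_const
    · apply ContinuousAt.mul
      · fun_prop
      · apply Real.continuous_sqrt.continuousAt.comp
        have : Continuous (fun d => QQ c k n d u) := by unfold QQ; continuity
        exact this.continuousAt
    · exact ne_of_gt (mul_pos hDpos (Real.sqrt_pos.2 hQpos))


include hc hn hγ hR in
lemma I0_contAt {d₀ : ℝ} (hd₀ : dstar < d₀) :
    ContinuousAt (fun d => ∫ u in Ioo (β d) (α d), FF γ c k n d u) d₀ := by
  obtain ⟨h1, h2, h3, h4, h5⟩ := hR d₀ hd₀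
  have hβca := beta_continuousAt hc hn hR hd₀
  have hαca := alpha_continuousAt hc hn hR hd₀
  rw [ContinuousAt, Metric.tendsto_nhds]
  intro ε hε
  set L := β d₀ / 2 with hLdef
  set U := α d₀ + 1 with hUdef
  have hL : 0 < L := by rw [hLdef]; linarith
  have hLβ : L < β d₀ := by rw [hLdef]; linarith
  have hαU : α d₀ < U := by rw [hUdef]; linarith
  set B := U ^ γ / (c * L ^ (n + 1)) with hBdef
  have hB : 0 ≤ B := div_nonneg (Real.rpow_nonneg (by linarith) _) (by positivity)
  obtain ⟨sL, hsL, δL, hδL, hevL⟩ := left_slope hc hn hR hd₀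
  obtain ⟨sR, hsR, δR, hδR, hevR⟩ := right_slope hc hn hR hd₀
  set T := B / Real.sqrt sL + B / Real.sqrt sR + 1 with hTdef
  have hT : 0 < T := by
    have t1 : 0 ≤ B / Real.sqrt sL := div_nonneg hB (Real.sqrt_nonneg _)
    have t2 : 0 ≤ B / Real.sqrt sR := div_nonneg hB (Real.sqrt_nonneg _)
    rw [hTdef]; linarith
  set δ := min (min δL δR) (min ((α d₀ - β d₀) / 8) ((ε / (16 * T)) ^ 2 / 2)) with hδdef
  have hδ : 0 < δ := by
    apply lt_min (lt_min hδL hδR) (lt_min (by linarith) (by positivity))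
  have hδL' : δ ≤ δL := le_trans (min_le_left _ _) (min_le_left _ _)
  have hδR' : δ ≤ δR := le_trans (min_le_left _ _) (min_le_right _ _)
  have hδ8 : δ ≤ (α d₀ - β d₀) / 8 := le_trans (min_le_right _ _) (min_le_left _ _)
  have hδε : δ ≤ (ε / (16 * T)) ^ 2 / 2 := le_trans (min_le_right _ _) (min_le_right _ _)
  set a := β d₀ + δ with hadef
  set b := α d₀ - δ with hbdef
  have ha : β d₀ < a := by rw [hadef]; linarith
  have hb : b < α d₀ := by rw [hbdef]; linarith
  have hab : a ≤ b := by rw [hadef, hbdef]; linarith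
  have htail : ∀ d, dstar < d → L ≤ β d → α d ≤ U →
      (∀ u, β d ≤ u → u ≤ β d₀ + δL → sL * (u - β d) ≤ QQ c k n d u) →
      (∀ u, α d₀ - δR ≤ u → u ≤ α d → sR * (α d - u) ≤ QQ c k n d u) →
      |β d - β d₀| < δ → |α d - α d₀| < δ →
      β d < a ∧ b < α d ∧
      |∫ u in Ioo (β d) a, FF γ c k n d u| ≤ ε / 8 ∧
      |∫ u in Ioo b (α d), FF γ c k n d u| ≤ ε / 8 := by
    intro d hd hLd hUd hSL hSR hβδ hαδ
    have hβδ' := abs_lt.1 hβδ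
    have hαδ' := abs_lt.1 hαδ
    have hβa : β d < a := by rw [hadef]; linarith
    have hbα : b < α d := by rw [hbdef]; linarith
    have haα : a ≤ α d := le_trans hab hbα.le
    have hβb : β d ≤ b := le_trans hβa.le hab
    have hsqδ : Real.sqrt (2 * δ) ≤ ε / (16 * T) := by
      have h2δ : 2 * δ ≤ (ε / (16 * T)) ^ 2 := by linarith
      calc Real.sqrt (2 * δ) ≤ Real.sqrt ((ε / (16 * T)) ^ 2) := Real.sqrt_le_sqrt h2δ
        _ = ε / (16 * T) := Real.sqrt_sq (by positivity)
    have hfin : ∀ s' B2 : ℝ, 0 < s' → B / Real.sqrt s' ≤ T → B2 ≤ 2 * δ → 0 ≤ B2 →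
        B / Real.sqrt s' * (2 * Real.sqrt B2) ≤ ε / 8 := by
      intro s' B2 hs' hBT hB2 hB20
      have hsq : Real.sqrt B2 ≤ ε / (16 * T) :=
        le_trans (Real.sqrt_le_sqrt hB2) hsqδ
      have hnn : 0 ≤ B / Real.sqrt s' := div_nonneg hB (Real.sqrt_nonneg _)
      calc B / Real.sqrt s' * (2 * Real.sqrt B2) ≤ T * (2 * (ε / (16 * T))) := by
            apply mul_le_mul hBT _ (by positivity) hT.le
            have : 0 ≤ Real.sqrt B2 := Real.sqrt_nonneg _
            linarith
        _ = ε / 8 := by field_simp; ring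
    refine ⟨hβa, hbα, ?_, ?_⟩
    · have hleft := tail_est hβa hsL hB ((ff_meas γ c k n d).aestronglyMeasurable) ?_
      · refine le_trans hleft.2 ?_
        apply hfin sL (a - β d) hsL _ (by linarith) (by linarith)
        rw [hTdef]
        have : 0 ≤ B / Real.sqrt sR := div_nonneg hB (Real.sqrt_nonneg _)
        linarith
      · intro u hu
        have huI : u ∈ Icc (β d) (α d) := ⟨hu.1.le, le_trans hu.2.le haα⟩
        refine le_trans (ff_bound hc hγ hR hd hL hLd hUd huI) ?_
        have hua : u ≤ β d₀ + δL := by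
          have := hu.2; rw [hadef] at this; linarith
        have hQge := hSL u hu.1.le hua
        exact div_le_div_of_nonneg_left hB
          (Real.sqrt_pos.2 (mul_pos hsL (sub_pos.2 hu.1))) (Real.sqrt_le_sqrt hQge)
    · have hright := tail_est_right hbα hsR hB ((ff_meas γ c k n d).aestronglyMeasurable) ?_
      · refine le_trans hright.2 ?_
        apply hfin sR (α d - b) hsR _ (by rw [hbdef]; linarith) (by linarith)
        rw [hTdef]
        have : 0 ≤ B / Real.sqrt sL := div_nonneg hB (Real.sqrt_nonneg _)
        linarith
      · intro u hu
        have huI : u ∈ Icc (β d) (α d) := ⟨le_trans hβb hu.1.le, hu.2.le⟩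
        refine le_trans (ff_bound hc hγ hR hd hL hLd hUd huI) ?_
        have hub : α d₀ - δR ≤ u := by
          have := hu.1; rw [hbdef] at this; linarith
        have hQge := hSR u hub hu.2.le
        exact div_le_div_of_nonneg_left hB
          (Real.sqrt_pos.2 (mul_pos hsR (sub_pos.2 hu.2))) (Real.sqrt_le_sqrt hQge)
  have hdecomp : ∀ d, dstar < d → β d < a → b < α d →
      ∫ u in Ioo (β d) (α d), FF γ c k n d u =
      (∫ u in Ioo (β d) a, FF γ c k n d u) + (∫ u in Ico a b, FF γ c k n d u)
        + (∫ u in Ioo b (α d), FF γ c k n d u) := by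
    intro d hd hβa hbα
    have hint := ff_integrable hc hn hγ hR hd
    have haα : a ≤ α d := le_trans hab hbα.le
    have hβb : β d ≤ b := le_trans hβa.le hab
    have hi1 : IntegrableOn (FF γ c k n d) (Ioo (β d) a) :=
      hint.mono_set (Ioo_subset_Ioo le_rfl haα)
    have hi2 : IntegrableOn (FF γ c k n d) (Ico a b) :=
      hint.mono_set (fun u hu => ⟨lt_of_lt_of_le hβa hu.1, lt_trans hu.2 hbα⟩)
    have hi3 : IntegrableOn (FF γ c k n d) (Ico b (α d)) :=
      hint.mono_set (fun u hu => ⟨lt_of_lt_of_le hβa (le_trans hab hu.1), hu.2⟩)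
    have hseteq : Ioo (β d) (α d) = (Ioo (β d) a ∪ Ico a b) ∪ Ico b (α d) := by
      ext u
      simp only [mem_union, mem_Ioo, mem_Ico]
      constructor
      · rintro ⟨hu1, hu2⟩
        rcases lt_or_ge u a with h | h
        · exact Or.inl (Or.inl ⟨hu1, h⟩)
        rcases lt_or_ge u b with h' | h'
        · exact Or.inl (Or.inr ⟨h, h'⟩)
        · exact Or.inr ⟨h', hu2⟩
      · rintro ((⟨hu1, hu2⟩ | ⟨hu1, hu2⟩) | ⟨hu1, hu2⟩) <;>
          exact ⟨by linarith, by linarith⟩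
    have hdisj1 : Disjoint (Ioo (β d) a) (Ico a b) := by
      rw [Set.disjoint_left]
      rintro u ⟨_, hu2⟩ ⟨hu3, _⟩
      linarith
    have hdisj2 : Disjoint (Ioo (β d) a ∪ Ico a b) (Ico b (α d)) := by
      rw [Set.disjoint_left]
      rintro u (⟨_, hu2⟩ | ⟨_, hu2⟩) ⟨hu3, _⟩ <;> linarith
    rw [hseteq, setIntegral_union hdisj2 measurableSet_Ico (hi1.union hi2) hi3,
      setIntegral_union hdisj1 measurableSet_Ico hi1 hi2]
    nth_rewrite 2 [MeasureTheory.integral_Ico_eq_integral_Ioo]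
    rfl
  -- events
  have hβev := Metric.tendsto_nhds.1 hβca δ hδ
  have hαev := Metric.tendsto_nhds.1 hαca δ hδ
  have hLev : ∀ᶠ d in nhds d₀, L < β d := hβca.eventually_const_lt hLβ
  have hUev : ∀ᶠ d in nhds d₀, α d < U := hαca.eventually_lt_const hαU
  have hmid := mid_cont hc hγ hR hd₀ ha hab hb
  have hmidev := Metric.tendsto_nhds.1 hmid (ε / 4) (by linarith)
  obtain ⟨hβa₀, hbα₀, htL₀, htR₀⟩ := htail d₀ hd₀ hLβ.le hαU.le
    hevL.self_of_nhds.2 hevR.self_of_nhds.2 (by simpa using hδ) (by simpa using hδ)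
  filter_upwards [Ioi_mem_nhds hd₀, hβev, hαev, hLev, hUev, hevL, hevR, hmidev] with d
    hd hβd hαd hLd hUd hSLd hSRd hmidd
  rw [Real.dist_eq] at hβd hαd hmidd ⊢
  obtain ⟨hβa', hbα', htLd, htRd⟩ := htail d hd hLd.le hUd.le hSLd.2 hSRd.2 hβd hαd
  rw [hdecomp d hd hβa' hbα', hdecomp d₀ hd₀ hβa₀ hbα₀]
  have e1 := abs_le.1 htLd
  have e2 := abs_le.1 htRd
  have e3 := abs_le.1 htL₀
  have e4 := abs_le.1 htR₀
  have e5 := abs_lt.1 hmidd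
  rw [abs_lt]
  constructor <;> [skip; skip] <;>
    · simp only [sub_lt_iff_lt_add, neg_lt] at *
      linarith

end dlayer2


theorem stmt_16 (p ρ : ℝ) (n : ℕ) (hn : 3 ≤ n)
    (hp : 0 < p) (hp1 : p < 1) (hpn : 3 / (1 - p) = (n : ℝ) + 1)
    (hρ : 0 < ρ)
    (α β : ℝ → ℝ)
    (hroots : ∀ d : ℝ, ρ ^ p * p ^ p * (1 - p) ^ (1 - p) < d →
      0 < β d ∧ β d < α d ∧
      (-(1 - p) ^ 2 * (β d) ^ (n + 1) + d * (β d) ^ 3 - ρ * p ^ 2 = 0) ∧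
      (-(1 - p) ^ 2 * (α d) ^ (n + 1) + d * (α d) ^ 3 - ρ * p ^ 2 = 0) ∧
      (∀ u : ℝ, β d < u → u < α d →
        0 < -(1 - p) ^ 2 * u ^ (n + 1) + d * u ^ 3 - ρ * p ^ 2)) :
    (∀ d : ℝ, ρ ^ p * p ^ p * (1 - p) ^ (1 - p) < d →
      IntegrableOn (fun u : ℝ =>
          u ^ ((4 - p) / (2 * (1 - p))) /
            ((d * u ^ 3 - ρ * p ^ 2) *
              Real.sqrt (-(1 - p) ^ 2 * u ^ (n + 1) + d * u ^ 3 - ρ * p ^ 2)))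
        (Set.Ioo (β d) (α d))) ∧
    ContinuousOn (fun d : ℝ =>
        3 * p * (1 - p) * Real.sqrt (ρ * d) *
          ∫ u in Set.Ioo (β d) (α d),
            u ^ ((4 - p) / (2 * (1 - p))) /
              ((d * u ^ 3 - ρ * p ^ 2) *
                Real.sqrt (-(1 - p) ^ 2 * u ^ (n + 1) + d * u ^ 3 - ρ * p ^ 2)))
      (Set.Ioi (ρ ^ p * p ^ p * (1 - p) ^ (1 - p))) := by
  have h1p : 0 < 1 - p := by linarith
  set dstar := ρ ^ p * p ^ p * (1 - p) ^ (1 - p) with hdstar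
  set c := (1 - p) ^ 2 with hcdef
  set k := ρ * p ^ 2 with hkdef
  set γ := (4 - p) / (2 * (1 - p)) with hγdef
  have hc : 0 < c := by rw [hcdef]; positivity
  have hγ : 0 < γ := by rw [hγdef]; apply div_pos <;> linarith
  have hR : ∀ d, dstar < d → 0 < β d ∧ β d < α d ∧ QQ c k n d (β d) = 0 ∧
      QQ c k n d (α d) = 0 ∧ ∀ u, β d < u → u < α d → 0 < QQ c k n d u := by
    intro d hd
    obtain ⟨a1, a2, a3, a4, a5⟩ := hroots d hd
    exact ⟨a1, a2, a3, a4, a5⟩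
  have hFF : ∀ d : ℝ, (fun u : ℝ =>
      u ^ γ / ((d * u ^ 3 - k) * Real.sqrt (-c * u ^ (n + 1) + d * u ^ 3 - k)))
      = FF γ c k n d := by
    intro d; funext u; rw [FF, QQ]
  constructor
  · intro d hd
    rw [hFF d]
    exact ff_integrable hc hn hγ hR hd
  · intro d hd
    apply ContinuousAt.continuousWithinAt
    apply ContinuousAt.mul
    · have : Continuous (fun d : ℝ => 3 * p * (1 - p) * Real.sqrt (ρ * d)) := by
        continuity
      exact this.continuousAt
    · have := I0_contAt hc hn hγ hR (mem_Ioi.1 hd)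
      have heq : (fun d : ℝ => ∫ u in Ioo (β d) (α d), FF γ c k n d u)
          = (fun d : ℝ => ∫ u in Ioo (β d) (α d),
              u ^ γ / ((d * u ^ 3 - k) * Real.sqrt (-c * u ^ (n + 1) + d * u ^ 3 - k))) := by
        funext d; rw [hFF d]
      rwa [heq] at this
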